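/- Let Σ be a positive-definite d×d matrix and let μ be a probability measure on ℝ^d with density p(x) = f(xᵀ Σ^{-1} x) for some non-increasing f : [0,∞) → [0,∞). For 0 < r₁ < r₂ and any x₀ with ‖x₀‖₂ = r₂, the mass of the Euclidean ball B(x₀, r₁) under μ satisfies μ(B(x₀,r₁)) ≤ C · (r₁ λ_max(Σ) / (r₂ λ_min(Σ)))^d for an absolute constant C (independent of μ, r₁, r₂). -/

import Mathlib

open MeasureTheory
open scoped ENNReal

set_option maxHeartbeats 1000000

open Metric Set Matrix

section Aux

variable {E : Type*} [NormedAddCommGroup E] [InnerProductSpace ℝ E]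

/-- key geometric containment: intersection of ball `B(x₀,r₁)` with `{‖x‖ ≤ ρ}` is inside
a ball of radius `r₁ ρ / r₂` centered at `t • x₀`. -/
lemma lens_subset (x₀ x : E) (r₁ r₂ ρ : ℝ) (h2 : ‖x₀‖ = r₂) (hr1 : 0 < r₁) (hrr : r₁ ≤ r₂)
    (hx : ‖x - x₀‖ ≤ r₁) (hxρ : ‖x‖ ≤ ρ) (hρ2 : ρ ≤ r₂) :
    ‖x - ((ρ^2 + r₂^2 - r₁^2)/(2*r₂^2)) • x₀‖ ≤ r₁ * ρ / r₂ := by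
  have hr2 : 0 < r₂ := lt_of_lt_of_le hr1 hrr
  set t : ℝ := (ρ^2 + r₂^2 - r₁^2)/(2*r₂^2) with ht
  have hρ0 : 0 ≤ ρ := le_trans (norm_nonneg x) hxρ
  have htnn : 0 ≤ t := by
    apply div_nonneg _ (by positivity)
    nlinarith
  have ht1 : t ≤ 1 := by
    rw [div_le_one (by positivity)]
    nlinarith
  have hinner : 2 * inner ℝ x x₀ ≥ ‖x‖^2 + r₂^2 - r₁^2 := by
    have e : ‖x - x₀‖^2 = ‖x‖^2 - 2 * inner ℝ x x₀ + ‖x₀‖^2 := norm_sub_sq_real x x₀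
    have : ‖x - x₀‖^2 ≤ r₁^2 := by nlinarith [norm_nonneg (x - x₀)]
    nlinarith
  have key : ‖x - t • x₀‖^2 ≤ (r₁ * ρ / r₂)^2 := by
    have e : ‖x - t • x₀‖^2 = ‖x‖^2 - 2 * (t * inner ℝ x x₀) + t^2 * ‖x₀‖^2 := by
      rw [norm_sub_sq_real, real_inner_smul_right, norm_smul]
      simp [mul_pow]
      try ring
    have hx2 : ‖x‖^2 ≤ ρ^2 := by nlinarith [norm_nonneg x]
    -- ‖x - t x₀‖² ≤ (1-t)‖x‖² - t(r₂²-r₁²) + t²r₂² ≤ (1-t)ρ² - t(r₂²-r₁²)+t²r₂²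
    --             = ρ² - (ρ²+r₂²-r₁²)²/(4r₂²) ≤ ρ²r₁²/r₂²
    have step1 : ‖x - t • x₀‖^2 ≤ ρ^2 - t * (ρ^2 + r₂^2 - r₁^2) + t^2 * r₂^2 := by
      rw [e, h2]
      nlinarith [mul_le_mul_of_nonneg_left hinner htnn]
    have step2 : ρ^2 - t * (ρ^2 + r₂^2 - r₁^2) + t^2 * r₂^2 = ρ^2 - (ρ^2 + r₂^2 - r₁^2)^2/(4*r₂^2) := by
      rw [ht]; field_simp; ring
    have amgm : (ρ^2 + (r₂^2 - r₁^2))^2 ≥ 4 * ρ^2 * (r₂^2 - r₁^2) := by nlinarith [sq_nonneg (ρ^2 - (r₂^2-r₁^2))]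
    have step3 : ρ^2 - (ρ^2 + r₂^2 - r₁^2)^2/(4*r₂^2) ≤ (r₁ * ρ / r₂)^2 := by
      rw [sub_le_iff_le_add,
        show (r₁ * ρ / r₂)^2 + (ρ^2+r₂^2-r₁^2)^2/(4*r₂^2)
            = (4*(r₁*ρ)^2 + (ρ^2+r₂^2-r₁^2)^2 * 1)/(4*r₂^2) from by field_simp,
        le_div_iff₀ (by positivity)]
      nlinarith [sq_nonneg (ρ^2 - r₂^2 + r₁^2)]
    linarith [step1, step2.le, step3, step2.ge]
  nlinarith [norm_nonneg (x - t • x₀), mul_nonneg (mul_nonneg hr1.le hρ0) (le_of_lt hr2), div_nonneg (mul_nonneg hr1.le hρ0) hr2.le]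


end Aux

lemma core_set_bound (d : ℕ) (hd : d ≠ 0)
    (q : EuclideanSpace ℝ (Fin d) → ℝ) (f' : ℝ → ℝ) (hf : Antitone f')
    (lmin lmax : ℝ) (hlmin : 0 < lmin) (hll : lmin ≤ lmax)
    (hq1 : ∀ x, ‖x‖^2 ≤ lmax * q x) (hq2 : ∀ x, lmin * q x ≤ ‖x‖^2)
    (r₁ r₂ : ℝ) (hr1 : 0 < r₁) (hr12 : r₁ < r₂)
    (x₀ : EuclideanSpace ℝ (Fin d)) (hx₀ : ‖x₀‖ = r₂) (s : ℝ) :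
    volume ({x | s < f' (q x)} ∩ closedBall x₀ r₁)
      ≤ ENNReal.ofReal ((r₁ * lmax / (r₂ * lmin))^d) * volume {x | s < f' (q x)} := by
  haveI : Nontrivial (EuclideanSpace ℝ (Fin d)) := by
    refine ⟨EuclideanSpace.single ⟨0, Nat.pos_of_ne_zero hd⟩ (1:ℝ), 0, fun h => ?_⟩
    have := congrArg norm h
    rw [EuclideanSpace.norm_single, norm_zero] at this
    norm_num at this
  have hr2 : 0 < r₂ := hr1.trans hr12
  have hlmax : 0 < lmax := hlmin.trans_le hll
  set A : Set (EuclideanSpace ℝ (Fin d)) := {x | s < f' (q x)} with hA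
  set B : Set (EuclideanSpace ℝ (Fin d)) := closedBall x₀ r₁ with hB
  set γ : ℝ := r₁ * lmax / (r₂ * lmin) with hγ
  rcases (A ∩ B).eq_empty_or_nonempty with hemp | ⟨z, hzA, hzB⟩
  · rw [hemp, measure_empty]; exact zero_le
  set κ : ℝ := Real.sqrt (lmax / lmin) with hκ
  have hκpos : 0 < κ := Real.sqrt_pos.mpr (by positivity)
  have hκsq : κ^2 = lmax / lmin := Real.sq_sqrt (by positivity)
  have hκ1 : 1 ≤ κ := by
    have h1 : (1:ℝ) ≤ lmax/lmin := (one_le_div hlmin).mpr hll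
    calc (1:ℝ) = Real.sqrt 1 := Real.sqrt_one.symm
      _ ≤ κ := Real.sqrt_le_sqrt h1
  have hγκ : γ = r₁ * κ^2 / r₂ := by rw [hγ, hκsq]; field_simp
  have hγ0 : 0 ≤ γ := by rw [hγκ]; positivity
  -- membership propagation: smaller norm (by factor κ) stays in A
  have hsub : ∀ x ∈ A, ∀ y : EuclideanSpace ℝ (Fin d), ‖y‖ * κ < ‖x‖ → y ∈ A := by
    intro x hx y hy
    have hy2 : ‖y‖^2 * κ^2 ≤ ‖x‖^2 := by
      nlinarith [norm_nonneg x, norm_nonneg y, mul_nonneg (norm_nonneg y) hκpos.le]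
    have hqyx : q y ≤ q x := by
      have h1 : lmax * q y ≤ κ^2 * ‖y‖^2 := by
        rw [hκsq, div_mul_eq_mul_div, le_div_iff₀ hlmin]
        nlinarith [mul_le_mul_of_nonneg_left (hq2 y) hlmax.le]
      have h2 : lmax * q y ≤ lmax * q x := by nlinarith [hq1 x]
      exact le_of_mul_le_mul_left h2 hlmax
    exact lt_of_lt_of_le hx (hf hqyx)
  -- the radius sup
  set P : Set ℝ := (fun x : EuclideanSpace ℝ (Fin d) => ‖x‖) '' (A ∩ B) with hP
  have hPne : P.Nonempty := ⟨‖z‖, ⟨z, ⟨hzA, hzB⟩, rfl⟩⟩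
  have hPbdd : BddAbove P := by
    refine ⟨r₂ + r₁, fun ρ hρ => ?_⟩
    obtain ⟨x, ⟨hxA, hxB⟩, rfl⟩ := hρ
    have h1 : ‖x - x₀‖ ≤ r₁ := by rwa [hB, mem_closedBall, dist_eq_norm] at hxB
    have h2 : x₀ + (x - x₀) = x := by abel
    calc ‖x‖ = ‖x₀ + (x - x₀)‖ := by rw [h2]
      _ ≤ ‖x₀‖ + ‖x - x₀‖ := norm_add_le _ _
      _ ≤ r₂ + r₁ := by rw [hx₀]; exact add_le_add le_rfl h1
  set ρs : ℝ := sSup P with hρs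
  have hρs0 : 0 ≤ ρs := le_trans (norm_nonneg z) (le_csSup hPbdd ⟨z, ⟨hzA, hzB⟩, rfl⟩)
  have hnorm_le : ∀ x ∈ A ∩ B, ‖x‖ ≤ ρs := fun x hx => le_csSup hPbdd ⟨x, hx, rfl⟩
  have hballA : ball (0:EuclideanSpace ℝ (Fin d)) (ρs/κ) ⊆ A := by
    intro y hy
    rw [mem_ball_zero_iff] at hy
    have h1 : ‖y‖ * κ < ρs := by rwa [← lt_div_iff₀ hκpos]
    obtain ⟨ρ, hρP, hlt⟩ := exists_lt_of_lt_csSup hPne h1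
    obtain ⟨x, ⟨hxA, _⟩, rfl⟩ := hρP
    exact hsub x hxA y hlt
  set U : ℝ≥0∞ := volume (ball (0:EuclideanSpace ℝ (Fin d)) 1) with hU
  have hvol_ball : ∀ R : ℝ, 0 ≤ R →
      volume (ball (0:EuclideanSpace ℝ (Fin d)) R) = ENNReal.ofReal (R^d) * U := by
    intro R hR
    rw [hU, Measure.addHaar_ball volume _ hR, finrank_euclideanSpace_fin]
  have hvol_cball : ∀ (c : EuclideanSpace ℝ (Fin d)) (R : ℝ), 0 ≤ R →
      volume (closedBall c R) = ENNReal.ofReal (R^d) * U := by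
    intro c R hR
    rw [hU, Measure.addHaar_closedBall volume _ hR, finrank_euclideanSpace_fin]
  have hA_lb : ENNReal.ofReal ((ρs/κ)^d) * U ≤ volume A := by
    rw [← hvol_ball _ (by positivity)]
    exact measure_mono hballA
  -- final comparison helper
  have hfinish : ∀ R : ℝ, 0 ≤ R → R ≤ γ * (ρs / κ) →
      ENNReal.ofReal (R^d) * U ≤ ENNReal.ofReal (γ^d) * volume A := by
    intro R hR hRle
    calc ENNReal.ofReal (R^d) * U ≤ ENNReal.ofReal ((γ * (ρs/κ))^d) * U :=
          mul_le_mul_left (ENNReal.ofReal_le_ofReal (pow_le_pow_left₀ hR hRle d)) U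
      _ = ENNReal.ofReal (γ^d) * (ENNReal.ofReal ((ρs/κ)^d) * U) := by
          rw [mul_pow, ENNReal.ofReal_mul (by positivity), mul_assoc]
      _ ≤ ENNReal.ofReal (γ^d) * volume A := mul_le_mul_right hA_lb _
  by_cases hcase : ρs ≤ r₂
  · -- lens containment
    have hcont : A ∩ B ⊆ closedBall (((ρs^2 + r₂^2 - r₁^2)/(2*r₂^2)) • x₀) (r₁ * ρs / r₂) := by
      rintro x ⟨hxA, hxB⟩
      rw [mem_closedBall, dist_eq_norm]
      exact lens_subset x₀ x r₁ r₂ ρs hx₀ hr1 hr12.le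
        (by rwa [hB, mem_closedBall, dist_eq_norm] at hxB) (hnorm_le x ⟨hxA, hxB⟩) hcase
    calc volume (A ∩ B) ≤ volume (closedBall _ (r₁ * ρs / r₂)) := measure_mono hcont
      _ = ENNReal.ofReal ((r₁ * ρs / r₂)^d) * U := hvol_cball _ _ (by positivity)
      _ ≤ ENNReal.ofReal (γ^d) * volume A := by
          apply hfinish _ (by positivity)
          have h1 : γ * (ρs / κ) = r₁ * κ * ρs / r₂ := by
            rw [hγκ]; field_simp
          rw [h1, div_le_div_iff₀ hr2 hr2]
          nlinarith [mul_nonneg (mul_nonneg (mul_nonneg (sub_nonneg.mpr hκ1) hr1.le) hρs0) hr2.le]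
  · push_neg at hcase
    calc volume (A ∩ B) ≤ volume B := measure_mono Set.inter_subset_right
      _ = ENNReal.ofReal (r₁^d) * U := hvol_cball _ _ hr1.le
      _ ≤ ENNReal.ofReal (γ^d) * volume A := by
          apply hfinish _ hr1.le
          have h1 : γ * (ρs / κ) = r₁ * κ * ρs / r₂ := by
            rw [hγκ]; field_simp
          rw [h1, le_div_iff₀ hr2]
          nlinarith [mul_le_mul_of_nonneg_left hcase.le hr1.le,
            mul_le_mul_of_nonneg_right hκ1 (mul_nonneg hr1.le hρs0)]

lemma quad_inv_bounds (d : ℕ) (M : Matrix (Fin d) (Fin d) ℝ) (hM : M.PosDef)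
    (lmin lmax : ℝ) (hlmin : 0 < lmin) (hll : lmin ≤ lmax)
    (hb : ∀ x : EuclideanSpace ℝ (Fin d),
      lmin * ‖x‖ ^ 2 ≤ ∑ i, ∑ j, x i * M i j * x j ∧
      ∑ i, ∑ j, x i * M i j * x j ≤ lmax * ‖x‖ ^ 2) :
    ∀ x : EuclideanSpace ℝ (Fin d),
      ‖x‖^2 ≤ lmax * (∑ i, ∑ j, x i * (M⁻¹) i j * x j) ∧
      lmin * (∑ i, ∑ j, x i * (M⁻¹) i j * x j) ≤ ‖x‖^2 := by
  have hlmax : 0 < lmax := hlmin.trans_le hll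
  -- norm squared = dot product, sums = dot products
  have hnorm : ∀ x : EuclideanSpace ℝ (Fin d), ‖x‖^2 = (x : Fin d → ℝ) ⬝ᵥ (x : Fin d → ℝ) := by
    intro x
    rw [EuclideanSpace.norm_eq, Real.sq_sqrt (by positivity)]
    simp [dotProduct, sq]
  have hsum : ∀ (N : Matrix (Fin d) (Fin d) ℝ) (v : Fin d → ℝ),
      (∑ i, ∑ j, v i * N i j * v j) = v ⬝ᵥ (N *ᵥ v) := by
    intro N v
    simp [dotProduct, Matrix.mulVec, Finset.mul_sum, mul_assoc]
  have hQ1 : ∀ v : Fin d → ℝ, lmin * (v ⬝ᵥ v) ≤ v ⬝ᵥ (M *ᵥ v) := by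
    intro v
    have h := (hb (WithLp.toLp 2 v)).1
    rw [hnorm, hsum M] at h
    simpa only [WithLp.ofLp_toLp] using h
  have hQ2 : ∀ v : Fin d → ℝ, v ⬝ᵥ (M *ᵥ v) ≤ lmax * (v ⬝ᵥ v) := by
    intro v
    have h := (hb (WithLp.toLp 2 v)).2
    rw [hnorm, hsum M] at h
    simpa only [WithLp.ofLp_toLp] using h
  have hself : ∀ v : Fin d → ℝ, 0 ≤ v ⬝ᵥ v :=
    fun v => Finset.sum_nonneg fun i _ => mul_self_nonneg _
  have hQ0 : ∀ v : Fin d → ℝ, 0 ≤ v ⬝ᵥ (M *ᵥ v) :=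
    fun v => le_trans (mul_nonneg hlmin.le (hself v)) (hQ1 v)
  have hsymm : Mᵀ = M := by
    ext i j
    rw [Matrix.transpose_apply]
    conv_lhs => rw [← hM.1]
    simp [Matrix.conjTranspose_apply]
  have hdet : IsUnit M.det := isUnit_iff_ne_zero.mpr hM.det_pos.ne'
  intro z
  set y : Fin d → ℝ := M⁻¹ *ᵥ (z : Fin d → ℝ) with hy
  set w : Fin d → ℝ := M *ᵥ y with hw
  have hwz : w = (z : Fin d → ℝ) := by
    rw [hw, hy, Matrix.mulVec_mulVec, Matrix.mul_nonsing_inv M hdet, Matrix.one_mulVec]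
  have hQinv : (∑ i, ∑ j, z i * (M⁻¹) i j * z j) = y ⬝ᵥ w := by
    rw [hsum M⁻¹ z]
    rw [show (M⁻¹ *ᵥ (z : Fin d → ℝ)) = y from rfl, ← hwz]
    exact dotProduct_comm _ _
  set s : ℝ := y ⬝ᵥ w with hs
  have hs0 : 0 ≤ s := hQ0 y
  have hyy : lmin * (y ⬝ᵥ y) ≤ s := hQ1 y
  -- the identity y ⬝ᵥ (M *ᵥ w) = w ⬝ᵥ w
  have hid : y ⬝ᵥ (M *ᵥ w) = w ⬝ᵥ w := by
    rw [Matrix.dotProduct_mulVec, ← Matrix.mulVec_transpose, hsymm, ← hw]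
  have hid2 : w ⬝ᵥ (M *ᵥ y) = w ⬝ᵥ w := by rw [← hw]
  -- (b): lmin * s ≤ w ⬝ᵥ w
  have hlow : lmin * s ≤ w ⬝ᵥ w := by
    rcases eq_or_lt_of_le hs0 with he | hpos
    · rw [← he, mul_zero]; exact hself w
    · have hcs : s^2 ≤ (y ⬝ᵥ y) * (w ⬝ᵥ w) := by
        have h := Finset.sum_mul_sq_le_sq_mul_sq Finset.univ y w
        rw [hs]; simpa [dotProduct, sq] using h
      have h1 : (lmin * s) * s ≤ (w ⬝ᵥ w) * s := by
        have h2 : lmin * s^2 ≤ lmin * ((y ⬝ᵥ y) * (w ⬝ᵥ w)) :=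
          mul_le_mul_of_nonneg_left hcs hlmin.le
        have h3 : (lmin * (y ⬝ᵥ y)) * (w ⬝ᵥ w) ≤ s * (w ⬝ᵥ w) :=
          mul_le_mul_of_nonneg_right hyy (hself w)
        nlinarith
      exact le_of_mul_le_mul_right h1 hpos
  -- (a): w ⬝ᵥ w ≤ lmax * s via Cauchy-Schwarz for the form (discriminant)
  have hupp : w ⬝ᵥ w ≤ lmax * s := by
    have hquad : ∀ τ : ℝ, 0 ≤ (w ⬝ᵥ (M *ᵥ w)) * (τ * τ) + (2 * (w ⬝ᵥ w)) * τ + s := by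
      intro τ
      have hexp : (y + τ • w) ⬝ᵥ (M *ᵥ (y + τ • w))
          = (w ⬝ᵥ (M *ᵥ w)) * (τ * τ) + (2 * (w ⬝ᵥ w)) * τ + s := by
        simp only [Matrix.mulVec_add, Matrix.mulVec_smul, dotProduct_add, add_dotProduct,
          dotProduct_smul, smul_dotProduct, smul_eq_mul, hid, hid2, ← hs]
        ring
      rw [← hexp]
      exact hQ0 _
    have hdisc := discrim_le_zero hquad
    rw [discrim] at hdisc
    have hWMW : w ⬝ᵥ (M *ᵥ w) ≤ lmax * (w ⬝ᵥ w) := hQ2 w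
    rcases eq_or_lt_of_le (hself w) with he | hpos
    · rw [← he]; positivity
    · have h4 : (w ⬝ᵥ w)^2 ≤ (lmax * s) * (w ⬝ᵥ w) := by
        have h5 : (w ⬝ᵥ w)^2 ≤ (w ⬝ᵥ (M *ᵥ w)) * s := by nlinarith
        calc (w ⬝ᵥ w)^2 ≤ (w ⬝ᵥ (M *ᵥ w)) * s := h5
          _ ≤ (lmax * (w ⬝ᵥ w)) * s := mul_le_mul_of_nonneg_right hWMW hs0
          _ = (lmax * s) * (w ⬝ᵥ w) := by ring
      have h6 : (w ⬝ᵥ w) * (w ⬝ᵥ w) ≤ (lmax * s) * (w ⬝ᵥ w) := by nlinarith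
      exact le_of_mul_le_mul_right h6 hpos
  constructor
  · rw [hQinv, hnorm z, ← hwz]; exact hupp
  · rw [hQinv, hnorm z, ← hwz]; exact hlow

/-- Elliptically symmetric unimodal distributions: there is an absolute constant
`C > 0` such that for any positive-definite `Σ` on `ℝ^d` with eigenvalue bounds
`λmin, λmax`, any probability measure with density `f(xᵀΣ⁻¹x)` for non-increasing
`f`, any `0 < r₁ < r₂`, and any `x₀` with `‖x₀‖ = r₂`, the mass of `B(x₀, r₁)`
is at most `C · (r₁ λmax / (r₂ λmin))^d`. -/
theorem elliptical_offcenter_mass_bound :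
    ∃ C : ℝ, 0 < C ∧
      ∀ (d : ℕ) (M : Matrix (Fin d) (Fin d) ℝ), M.PosDef →
      ∀ (lmin lmax : ℝ), 0 < lmin →
      (∀ x : EuclideanSpace ℝ (Fin d),
        lmin * ‖x‖ ^ 2 ≤ ∑ i, ∑ j, x i * M i j * x j ∧
        ∑ i, ∑ j, x i * M i j * x j ≤ lmax * ‖x‖ ^ 2) →
      ∀ (f : ℝ → ℝ), AntitoneOn f (Set.Ici 0) → (∀ t, 0 ≤ f t) →
      ∀ (μ : Measure (EuclideanSpace ℝ (Fin d))),
        μ = volume.withDensity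
          (fun x => ENNReal.ofReal (f (∑ i, ∑ j, x i * (M⁻¹) i j * x j))) →
        IsProbabilityMeasure μ →
      ∀ (r₁ r₂ : ℝ), 0 < r₁ → r₁ < r₂ →
      ∀ x₀ : EuclideanSpace ℝ (Fin d), ‖x₀‖ = r₂ →
        (μ (Metric.closedBall x₀ r₁)).toReal ≤
          C * (r₁ * lmax / (r₂ * lmin)) ^ d := by
  refine ⟨1, one_pos, ?_⟩
  intro d M hM lmin lmax hlmin hb f hf hf0 μ hμ hμprob r₁ r₂ hr1 hr12 x₀ hx₀
  rcases Nat.eq_zero_or_pos d with rfl | hd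
  · rw [pow_zero, mul_one]
    exact ENNReal.toReal_le_of_le_ofReal zero_le_one
      (by simpa [ENNReal.ofReal_one] using (prob_le_one (μ := μ) (s := closedBall x₀ r₁)))
  have hd0 : d ≠ 0 := hd.ne'
  have hr2 : 0 < r₂ := hr1.trans hr12
  have hll : lmin ≤ lmax := by
    have h := hb (EuclideanSpace.single ⟨0, hd⟩ (1:ℝ))
    rw [EuclideanSpace.norm_single] at h
    simp only [norm_one, one_pow, mul_one] at h
    linarith [h.1, h.2]
  have hlmax : 0 < lmax := hlmin.trans_le hll
  set q : EuclideanSpace ℝ (Fin d) → ℝ := fun x => ∑ i, ∑ j, x i * (M⁻¹) i j * x j with hq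
  have hqb := quad_inv_bounds d M hM lmin lmax hlmin hll hb
  have hq1 : ∀ x, ‖x‖^2 ≤ lmax * q x := fun x => (hqb x).1
  have hq2 : ∀ x, lmin * q x ≤ ‖x‖^2 := fun x => (hqb x).2
  have hq0 : ∀ x, 0 ≤ q x := by
    intro x
    nlinarith [hq1 x, sq_nonneg ‖x‖]
  set f' : ℝ → ℝ := fun t => f (max t 0) with hf'def
  have hf'anti : Antitone f' := by
    intro a b hab
    exact hf (le_max_right a 0) (le_max_right b 0) (max_le_max hab le_rfl)
  have hf'0 : ∀ t, 0 ≤ f' t := fun t => hf0 _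
  have hfq : ∀ x, f (q x) = f' (q x) := by
    intro x
    rw [hf'def]
    simp only [max_eq_left (hq0 x)]
  -- measurability
  have hqmeas : Measurable q := by
    apply Finset.measurable_sum
    intro i _
    apply Finset.measurable_sum
    intro j _
    have hcoord : ∀ k : Fin d, Measurable fun x : EuclideanSpace ℝ (Fin d) => x k := by
      intro k
      exact (EuclideanSpace.proj (𝕜 := ℝ) k).continuous.measurable
    exact ((hcoord i).mul_const _).mul (hcoord j)
  have hgmeas : Measurable fun x => f' (q x) := hf'anti.measurable.comp hqmeas
  have hdens : (fun x => ENNReal.ofReal (f (q x))) = fun x => ENNReal.ofReal (f' (q x)) :=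
    funext fun x => by rw [hfq]
  have hAmeas : ∀ s : ℝ, MeasurableSet {x : EuclideanSpace ℝ (Fin d) | s < f' (q x)} :=
    fun s => hgmeas measurableSet_Ioi
  -- total mass via layer cake
  have hlc := lintegral_eq_lintegral_meas_lt (volume : Measure (EuclideanSpace ℝ (Fin d)))
      (Filter.Eventually.of_forall fun x => hf'0 (q x)) (hgmeas.aemeasurable)
  have htot : (∫⁻ t in Set.Ioi (0:ℝ), volume {x | t < f' (q x)}) = 1 := by
    have h1 := hμprob.measure_univ
    rw [hμ] at h1
    rw [withDensity_apply _ MeasurableSet.univ, Measure.restrict_univ, hdens] at h1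
    rw [← hlc]
    exact h1
  -- ball mass via layer cake on the restricted measure
  set B : Set (EuclideanSpace ℝ (Fin d)) := closedBall x₀ r₁ with hB
  have hμB : μ B = ∫⁻ t in Set.Ioi (0:ℝ), volume ({x | t < f' (q x)} ∩ B) := by
    rw [hμ, withDensity_apply _ (measurableSet_closedBall), hdens]
    rw [lintegral_eq_lintegral_meas_lt (volume.restrict B)
      (Filter.Eventually.of_forall fun x => hf'0 (q x)) (hgmeas.aemeasurable)]
    congr 1
    funext t
    rw [Measure.restrict_apply (hAmeas t)]
  set γ : ℝ := r₁ * lmax / (r₂ * lmin) with hγ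
  have hγ0 : 0 ≤ γ := by positivity
  have hbound : μ B ≤ ENNReal.ofReal (γ^d) := by
    rw [hμB]
    calc (∫⁻ t in Set.Ioi (0:ℝ), volume ({x | t < f' (q x)} ∩ B))
        ≤ ∫⁻ t in Set.Ioi (0:ℝ), ENNReal.ofReal (γ^d) * volume {x | t < f' (q x)} := by
          apply lintegral_mono
          intro t
          exact core_set_bound d hd0 q f' hf'anti lmin lmax hlmin hll hq1 hq2 r₁ r₂ hr1 hr12 x₀ hx₀ t
      _ = ENNReal.ofReal (γ^d) * ∫⁻ t in Set.Ioi (0:ℝ), volume {x | t < f' (q x)} :=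
          lintegral_const_mul' _ _ ENNReal.ofReal_ne_top
      _ = ENNReal.ofReal (γ^d) := by rw [htot, mul_one]
  rw [one_mul]
  exact ENNReal.toReal_le_of_le_ofReal (by positivity) hbound
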